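/- If RᵀR_d = exp(θ v̂) for θ ∈ [0, π] and a unit vector v ∈ ℝ³, then ‖R − R_d‖² = 4(1 − cos θ) and ‖½(R_dᵀR − RᵀR_d)^∨‖ = sin θ, where R, R_d ∈ SO(3). -/

import Mathlib

set_option maxHeartbeats 1000000

open Matrix Real
open scoped Nat

noncomputable def hat (v : Fin 3 → ℝ) : Matrix (Fin 3) (Fin 3) ℝ :=
  !![0, -v 2, v 1; v 2, 0, -v 0; -v 1, v 0, 0]

noncomputable def vee (A : Matrix (Fin 3) (Fin 3) ℝ) : Fin 3 → ℝ := ![A 2 1, A 0 2, A 1 0]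

/-- Frobenius norm of a 3×3 real matrix: ‖A‖ = √(tr(Aᵀ A)). -/
noncomputable def fnorm (A : Matrix (Fin 3) (Fin 3) ℝ) : ℝ := Real.sqrt ((Aᵀ * A).trace)

/-- Euclidean norm on ℝ³. -/
noncomputable def enorm3 (v : Fin 3 → ℝ) : ℝ := Real.sqrt (v ⬝ᵥ v)

/-- The special orthogonal group SO(3). -/
def SO3 (R : Matrix (Fin 3) (Fin 3) ℝ) : Prop := Rᵀ * R = 1 ∧ R.det = 1

lemma hat_cube (v : Fin 3 → ℝ) (hv : v 0 ^ 2 + v 1 ^ 2 + v 2 ^ 2 = 1) :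
    hat v ^ 3 = -(hat v) := by
  show hat v ^ (2 + 1) = _
  rw [pow_succ, pow_two]
  ext i j
  fin_cases i <;> fin_cases j <;>
    simp [hat, Matrix.mul_apply, Fin.sum_univ_three] <;>
    first
      | linear_combination (v 0) * hv
      | linear_combination (-(v 0)) * hv
      | linear_combination (v 1) * hv
      | linear_combination (-(v 1)) * hv
      | linear_combination (v 2) * hv
      | linear_combination (-(v 2)) * hv
      | ring

lemma hat_pow_odd (v : Fin 3 → ℝ) (hv : v 0 ^ 2 + v 1 ^ 2 + v 2 ^ 2 = 1) (n : ℕ) :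
    hat v ^ (2 * n + 1) = ((-1 : ℝ) ^ n) • hat v := by
  induction n with
  | zero => simp
  | succ n ih =>
    have h1 : 2 * (n + 1) + 1 = (2 * n + 1) + 2 := by ring
    rw [h1, pow_add, ih, Algebra.smul_mul_assoc, ← pow_succ']
    have h3 : hat v ^ (2 + 1) = -(hat v) := hat_cube v hv
    rw [h3, pow_succ]
    simp [smul_smul, mul_comm]

lemma hat_pow_even (v : Fin 3 → ℝ) (hv : v 0 ^ 2 + v 1 ^ 2 + v 2 ^ 2 = 1) (n : ℕ) :
    hat v ^ (2 * (n + 1)) = ((-1 : ℝ) ^ n) • hat v ^ 2 := by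
  have : 2 * (n + 1) = (2 * n + 1) + 1 := by ring
  rw [this, pow_succ, hat_pow_odd v hv, Algebra.smul_mul_assoc, ← pow_two]

/-- Rodrigues' formula. -/
lemma rodrigues (θ : ℝ) (v : Fin 3 → ℝ) (hv : v 0 ^ 2 + v 1 ^ 2 + v 2 ^ 2 = 1) :
    NormedSpace.exp (θ • hat v) =
      1 + Real.sin θ • hat v + (1 - Real.cos θ) • hat v ^ 2 := by
  letI : SeminormedRing (Matrix (Fin 3) (Fin 3) ℝ) := Matrix.linftyOpSemiNormedRing
  letI : NormedRing (Matrix (Fin 3) (Fin 3) ℝ) := Matrix.linftyOpNormedRing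
  letI : NormedAlgebra ℝ (Matrix (Fin 3) (Fin 3) ℝ) := Matrix.linftyOpNormedAlgebra
  have hexp : HasSum (fun n => (n !⁻¹ : ℝ) • (θ • hat v) ^ n)
      (NormedSpace.exp (θ • hat v)) :=
    NormedSpace.exp_series_hasSum_exp' (θ • hat v)
  have hodd : HasSum (fun k => ((2 * k + 1)!⁻¹ : ℝ) • (θ • hat v) ^ (2 * k + 1))
      (Real.sin θ • hat v) := by
    have h := (Real.hasSum_sin θ).smul_const (hat v)
    convert h using 2 with k
    simp only [smul_pow, hat_pow_odd v hv k, smul_smul]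
    congr 1
    field_simp
  have heven : HasSum (fun k => ((2 * k)!⁻¹ : ℝ) • (θ • hat v) ^ (2 * k))
      (1 + (1 - Real.cos θ) • hat v ^ 2) := by
    rw [← hasSum_nat_add_iff' 1]
    have hsum0 : (∑ i ∈ Finset.range 1, ((2 * i)!⁻¹ : ℝ) • (θ • hat v) ^ (2 * i))
        = (1 : Matrix (Fin 3) (Fin 3) ℝ) := by
      simp
    rw [hsum0]
    have hc := (hasSum_nat_add_iff'
      (f := fun n => (-1 : ℝ) ^ n * θ ^ (2 * n) / (2 * n)!) 1).2 (Real.hasSum_cos θ)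
    simp only [Finset.range_one, Finset.sum_singleton, pow_zero, mul_zero, one_mul,
      Nat.factorial_zero, Nat.cast_one, div_one] at hc
    have h := (hc.neg).smul_const (hat v ^ 2)
    convert h using 1
    · rfl
    · funext k
      simp only [smul_pow, hat_pow_even v hv k, smul_smul]
      congr 1
      field_simp
      ring
    · module
  have htot := HasSum.even_add_odd (f := fun n => (n !⁻¹ : ℝ) • (θ • hat v) ^ n) heven hodd
  rw [hexp.unique htot]
  exact add_right_comm _ _ _

theorem axis_angle_errors (R Rd : Matrix (Fin 3) (Fin 3) ℝ) (hR : SO3 R) (hRd : SO3 Rd)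
    (θ : ℝ) (hθ : θ ∈ Set.Icc 0 Real.pi) (v : Fin 3 → ℝ) (hv : enorm3 v = 1)
    (hRRd : Rᵀ * Rd = NormedSpace.exp (θ • hat v)) :
    fnorm (R - Rd) ^ 2 = 4 * (1 - Real.cos θ) ∧
    enorm3 ((1 / 2 : ℝ) • vee (Rdᵀ * R - Rᵀ * Rd)) = Real.sin θ := by
  have hvv : v 0 ^ 2 + v 1 ^ 2 + v 2 ^ 2 = 1 := by
    have h0 : v ⬝ᵥ v = v 0 ^ 2 + v 1 ^ 2 + v 2 ^ 2 := by
      simp [dotProduct, Fin.sum_univ_three]; ring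
    have h1 : Real.sqrt (v ⬝ᵥ v) = 1 := hv
    nlinarith [Real.sq_sqrt (show (0:ℝ) ≤ v ⬝ᵥ v by nlinarith [sq_nonneg (v 0), sq_nonneg (v 1), sq_nonneg (v 2)]), h1]
  have hQ : Rᵀ * Rd = 1 + Real.sin θ • hat v + (1 - Real.cos θ) • hat v ^ 2 := by
    rw [hRRd, rodrigues θ v hvv]
  constructor
  · -- first part
    have htr : ((R - Rd)ᵀ * (R - Rd)).trace = 4 * (1 - Real.cos θ) := by
      have expand : (R - Rd)ᵀ * (R - Rd)
          = Rᵀ * R + Rdᵀ * Rd - (Rᵀ * Rd) - (Rᵀ * Rd)ᵀ := by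
        rw [transpose_sub, sub_mul, mul_sub, mul_sub, transpose_mul, transpose_transpose]
        abel
      rw [expand, hR.1, hRd.1, hQ]
      simp only [trace_sub, trace_add, trace_smul, trace_transpose, trace_one]
      have h1 : (hat v).trace = 0 := by simp [hat, Matrix.trace, Fin.sum_univ_three]
      have h2 : (hat v ^ 2).trace = -2 := by
        rw [pow_two]
        simp [hat, Matrix.trace, Matrix.mul_apply, Fin.sum_univ_three, Matrix.diag]
        nlinarith [hvv]
      rw [h1, h2]
      norm_num
      ring
    have hnn : (0:ℝ) ≤ 4 * (1 - Real.cos θ) := by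
      nlinarith [Real.cos_le_one θ]
    rw [fnorm, htr, Real.sq_sqrt hnn]
  · -- second part
    have hskew : Rdᵀ * R - Rᵀ * Rd = (-(2 * Real.sin θ)) • hat v := by
      have hRdR : Rdᵀ * R = (Rᵀ * Rd)ᵀ := by
        rw [transpose_mul, transpose_transpose]
      rw [hRdR, hQ]
      have hT : (hat v)ᵀ = -(hat v) := by
        ext i j
        fin_cases i <;> fin_cases j <;> simp [hat]
      have hsq : (-(hat v)) ^ 2 = hat v ^ 2 := neg_sq _
      rw [transpose_add, transpose_add, transpose_smul, transpose_smul, transpose_one,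
        transpose_pow, hT, hsq]
      module
    rw [hskew]
    have hveeq : (1 / 2 : ℝ) • vee ((-(2 * Real.sin θ)) • hat v) = (-Real.sin θ) • v := by
      funext i
      fin_cases i <;>
        simp [vee, hat, Pi.smul_apply] <;> ring
    rw [hveeq]
    have hdot : ((-Real.sin θ) • v) ⬝ᵥ ((-Real.sin θ) • v) = Real.sin θ ^ 2 := by
      simp [dotProduct, Fin.sum_univ_three, Pi.smul_apply]
      nlinarith [hvv]
    rw [enorm3, hdot, Real.sqrt_sq_eq_abs, abs_of_nonneg (Real.sin_nonneg_of_mem_Icc hθ)]
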